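/- Let n > 2 be an odd integer with n ≡ 2 (mod 3) and let σ be a derangement of {1,…,n}. Then φ(σ) · ∏_{1 ≤ i < j ≤ n} p_{i,j} ∈ C_n. -/

import Mathlib

attribute [local instance] Classical.propDecidable

/-- `G_n` is realized additively as the group of `ℤ`-valued functions on unordered
pairs from `{1,…,n}`; `pgen n i j` is the generator `p_{i,j} = p_{j,i}`. -/
noncomputable def pgen (n : ℕ) (i j : Fin n) : Sym2 (Fin n) → ℤ :=
  Pi.single s(i, j) 1

/-- `φ(σ) = ∏_i p_{i,σ(i)}` (written additively). -/
noncomputable def phi (n : ℕ) (σ : Equiv.Perm (Fin n)) : Sym2 (Fin n) → ℤ :=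
  ∑ i : Fin n, pgen n i (σ i)

/-- The subgroup `C_n ≤ G_n` generated by the elements
`c_{i,j,k} = p_{i,j}·p_{j,k}·p_{i,k}` for pairwise distinct `i,j,k`. -/
noncomputable def Cgrp (n : ℕ) : AddSubgroup (Sym2 (Fin n) → ℤ) :=
  AddSubgroup.closure {x | ∃ i j k : Fin n, i ≠ j ∧ j ≠ k ∧ i ≠ k ∧
    x = pgen n i j + pgen n j k + pgen n i k}

open Finset

lemma perm_inv_apply_self {α : Type*} (σ : Equiv.Perm α) (x : α) : σ⁻¹ (σ x) = x := by
  simp only [Equiv.Perm.coe_inv, Equiv.symm_apply_apply]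

lemma perm_apply_inv_self {α : Type*} (σ : Equiv.Perm α) (x : α) : σ (σ⁻¹ x) = x := by
  simp only [Equiv.Perm.coe_inv, Equiv.apply_symm_apply]

lemma pgen_comm (n : ℕ) (i j : Fin n) : pgen n i j = pgen n j i := by
  unfold pgen; rw [Sym2.eq_swap]

lemma tri_mem (n : ℕ) {i j k : Fin n} (h1 : i ≠ j) (h2 : j ≠ k) (h3 : i ≠ k) :
    pgen n i j + pgen n j k + pgen n i k ∈ Cgrp n :=
  AddSubgroup.subset_closure ⟨i, j, k, h1, h2, h3, rfl⟩

lemma six_eq (n : ℕ) (a b c d e : Fin n) :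
    (6 : ℤ) • pgen n a b =
      (2:ℤ) • (pgen n c d + pgen n d e + pgen n c e)
      + (2:ℤ) • (pgen n a b + pgen n b c + pgen n a c)
      + (2:ℤ) • (pgen n a b + pgen n b d + pgen n a d)
      + (2:ℤ) • (pgen n a b + pgen n b e + pgen n a e)
      - (pgen n a c + pgen n c d + pgen n a d)
      - (pgen n b c + pgen n c d + pgen n b d)
      - (pgen n a c + pgen n c e + pgen n a e)
      - (pgen n b c + pgen n c e + pgen n b e)
      - (pgen n a d + pgen n d e + pgen n a e)
      - (pgen n b d + pgen n d e + pgen n b e) := by abel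

lemma exists_notin {n : ℕ} (s : Finset (Fin n)) (h : s.card < n) : ∃ x, x ∉ s := by
  have h2 : 0 < sᶜ.card := by
    rw [Finset.card_compl]; simp only [Fintype.card_fin]; omega
  obtain ⟨x, hx⟩ := Finset.card_pos.mp h2
  exact ⟨x, Finset.mem_compl.mp hx⟩

lemma six_mem (n : ℕ) (hn : 5 ≤ n) {a b : Fin n} (hab : a ≠ b) :
    (6:ℤ) • pgen n a b ∈ Cgrp n := by
  obtain ⟨c, hc⟩ := exists_notin ({a, b} : Finset (Fin n))
    (lt_of_le_of_lt (Finset.card_insert_le _ _) (by simp; omega))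
  obtain ⟨d, hd⟩ := exists_notin ({a, b, c} : Finset (Fin n))
    (lt_of_le_of_lt (le_trans (Finset.card_insert_le _ _)
      (Nat.succ_le_succ (Finset.card_insert_le _ _))) (by simp; omega))
  obtain ⟨e, he⟩ := exists_notin ({a, b, c, d} : Finset (Fin n))
    (lt_of_le_of_lt (le_trans (Finset.card_insert_le _ _)
      (Nat.succ_le_succ (le_trans (Finset.card_insert_le _ _)
      (Nat.succ_le_succ (Finset.card_insert_le _ _))))) (by simp; omega))
  simp only [Finset.mem_insert, Finset.mem_singleton, not_or] at hc hd he
  obtain ⟨hca, hcb⟩ := hc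
  obtain ⟨hda, hdb, hdc⟩ := hd
  obtain ⟨hea, heb, hec, hed⟩ := he
  rw [six_eq n a b c d e]
  refine sub_mem (sub_mem (sub_mem (sub_mem (sub_mem (sub_mem
    (add_mem (add_mem (add_mem ?_ ?_) ?_) ?_) ?_) ?_) ?_) ?_) ?_) ?_ <;>
    first
      | exact zsmul_mem (tri_mem n (by tauto) (by tauto) (by tauto)) 2
      | exact tri_mem n (by tauto) (by tauto) (by tauto)

lemma inner_collapse {n : ℕ} (p : Fin n → Prop) [DecidablePred p]
    (x : Sym2 (Fin n) → ℤ) :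
    ∑ c : Fin n, (if p c then x else 0) = ((univ.filter p).card : ℤ) • x := by
  rw [← Finset.sum_filter, Finset.sum_const, natCast_zsmul]

lemma filter_gt_eq_Ioi {n : ℕ} (b : Fin n) : univ.filter (fun c => b < c) = Ioi b := by
  ext c; simp
lemma filter_lt_eq_Iio {n : ℕ} (b : Fin n) : univ.filter (fun c => c < b) = Iio b := by
  ext c; simp
lemma filter_between {n : ℕ} (a c : Fin n) :
    univ.filter (fun b => a < b ∧ b < c) = Ioo a c := by
  ext b; simp

lemma T1_eq (n : ℕ) :
    ∑ a : Fin n, ∑ b : Fin n, ∑ c : Fin n, (if a < b ∧ b < c then pgen n a b else 0)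
    = ∑ i : Fin n, ∑ j : Fin n,
        (if i < j then ((n - 1 - (j:ℕ) : ℕ) : ℤ) • pgen n i j else 0) := by
  refine Finset.sum_congr rfl fun a _ => Finset.sum_congr rfl fun b _ => ?_
  by_cases hab : a < b
  · simp only [hab, true_and, if_true]
    rw [inner_collapse (fun c => b < c), filter_gt_eq_Ioi, Fin.card_Ioi]
  · simp [hab]

lemma T2_eq (n : ℕ) :
    ∑ a : Fin n, ∑ b : Fin n, ∑ c : Fin n, (if a < b ∧ b < c then pgen n b c else 0)
    = ∑ i : Fin n, ∑ j : Fin n,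
        (if i < j then (((i:ℕ)) : ℤ) • pgen n i j else 0) := by
  rw [Finset.sum_comm]
  refine Finset.sum_congr rfl fun b _ => ?_
  rw [Finset.sum_comm]
  refine Finset.sum_congr rfl fun c _ => ?_
  by_cases hbc : b < c
  · simp only [hbc, and_true, if_true]
    rw [inner_collapse (fun a => a < b), filter_lt_eq_Iio, Fin.card_Iio]
  · simp [hbc]

lemma T3_eq (n : ℕ) :
    ∑ a : Fin n, ∑ b : Fin n, ∑ c : Fin n, (if a < b ∧ b < c then pgen n a c else 0)
    = ∑ i : Fin n, ∑ j : Fin n, (((j:ℕ) - (i:ℕ) - 1 : ℕ) : ℤ) • pgen n i j := by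
  refine Finset.sum_congr rfl fun a _ => ?_
  rw [Finset.sum_comm]
  refine Finset.sum_congr rfl fun c _ => ?_
  rw [inner_collapse (fun b => a < b ∧ b < c), filter_between, Fin.card_Ioo]

lemma T_eq (n : ℕ) :
    ∑ a : Fin n, ∑ b : Fin n, ∑ c : Fin n,
      (if a < b ∧ b < c then pgen n a b + pgen n b c + pgen n a c else 0)
    = ((n:ℤ) - 2) • ∑ i : Fin n, ∑ j : Fin n, (if i < j then pgen n i j else 0) := by
  have hsplit : ∀ a b c : Fin n,
      (if a < b ∧ b < c then pgen n a b + pgen n b c + pgen n a c else 0)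
      = (if a < b ∧ b < c then pgen n a b else 0)
        + (if a < b ∧ b < c then pgen n b c else 0)
        + (if a < b ∧ b < c then pgen n a c else 0) := by
    intro a b c; split_ifs <;> simp
  simp only [hsplit, Finset.sum_add_distrib]
  rw [T1_eq, T2_eq, T3_eq, Finset.smul_sum]
  rw [← Finset.sum_add_distrib, ← Finset.sum_add_distrib]
  refine Finset.sum_congr rfl fun i _ => ?_
  rw [Finset.smul_sum, ← Finset.sum_add_distrib, ← Finset.sum_add_distrib]
  refine Finset.sum_congr rfl fun j _ => ?_
  by_cases hij : i < j
  · have h1 : (i:ℕ) < (j:ℕ) := hij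
    have h2 : (j:ℕ) < n := j.isLt
    simp only [hij, if_true]
    rw [← add_zsmul, ← add_zsmul]
    congr 1
    omega
  · have hji : (j:ℕ) ≤ (i:ℕ) := not_lt.mp hij
    have h0 : ((j:ℕ) - (i:ℕ) - 1 : ℕ) = 0 := by omega
    simp [hij, h0]

lemma erase_split {n : ℕ} (i a : Fin n) (ha : a ≠ i) (g : Fin n → Sym2 (Fin n) → ℤ) :
    ∑ j : Fin n, (if j ≠ i ∧ j ≠ a then g j else 0)
      = (∑ j : Fin n, if j ≠ i then g j else 0) - g a := by
  rw [eq_sub_iff_add_eq]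
  have h1 : ∀ j : Fin n, (if j ≠ i then g j else 0)
      = (if j ≠ i ∧ j ≠ a then g j else 0) + (if j = a then g j else 0) := by
    intro j
    by_cases hja : j = a
    · subst hja; simp [ha]
    · by_cases hji : j = i <;> simp [hji, hja, Ne.symm ha]
  have h2 : ∑ j : Fin n, (if j = a then g j else 0) = g a := by
    simp [Finset.sum_ite_eq']
  rw [← h2]
  rw [← Finset.sum_add_distrib]
  exact (Finset.sum_congr rfl fun j _ => (h1 j).symm)

/-- For odd `n > 2` with `n ≡ 2 (mod 3)` and any derangement `σ` of `{1,…,n}`,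
`φ(σ) · ∏_{1 ≤ i < j ≤ n} p_{i,j} ∈ C_n` (written additively). -/
theorem stmt_15 (n : ℕ) (h2 : 2 < n) (hodd : Odd n) (hmod : n % 3 = 2)
    (σ : Equiv.Perm (Fin n)) (hσ : ∀ i, σ i ≠ i) :
    phi n σ + ∑ q ∈ Finset.univ.filter (fun q : Fin n × Fin n => q.1 < q.2),
        pgen n q.1 q.2 ∈ Cgrp n := by
  obtain ⟨m, hm⟩ := hodd
  obtain ⟨k, hk⟩ : ∃ k, n = 6 * k + 5 := ⟨n / 6, by omega⟩
  have hn5 : 5 ≤ n := by omega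
  -- rewrite the pair sum as a double sum
  have hEconv : ∑ q ∈ Finset.univ.filter (fun q : Fin n × Fin n => q.1 < q.2),
      pgen n q.1 q.2 = ∑ i : Fin n, ∑ j : Fin n, (if i < j then pgen n i j else 0) := by
    rw [Finset.sum_filter, Fintype.sum_prod_type]
  rw [hEconv]
  set E := ∑ i : Fin n, ∑ j : Fin n, (if i < j then pgen n i j else 0) with hE
  set Φ := phi n σ with hΦ
  -- T : sum over increasing triples of triangles
  set T := ∑ a : Fin n, ∑ b : Fin n, ∑ c : Fin n,
      (if a < b ∧ b < c then pgen n a b + pgen n b c + pgen n a c else 0) with hT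
  have hTmem : T ∈ Cgrp n := by
    refine sum_mem fun a _ => sum_mem fun b _ => sum_mem fun c _ => ?_
    split_ifs with h
    · exact tri_mem n (ne_of_lt h.1) (ne_of_lt h.2) (ne_of_lt (h.1.trans h.2))
    · exact zero_mem _
  have hTeq : T = ((n:ℤ) - 2) • E := T_eq n
  -- S : the derangement-indexed triangles
  set S := ∑ i : Fin n, ∑ j : Fin n,
      (if j ≠ i ∧ j ≠ σ i then pgen n i (σ i) + pgen n (σ i) j + pgen n i j else 0)
    with hS
  have hSmem : S ∈ Cgrp n := by
    refine sum_mem fun i _ => sum_mem fun j _ => ?_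
    split_ifs with h
    · exact tri_mem n (Ne.symm (hσ i)) (Ne.symm h.2) (Ne.symm h.1)
    · exact zero_mem _
  -- the D sum
  set D := ∑ i : Fin n, ∑ j : Fin n, (if j ≠ i then pgen n i j else 0) with hD
  have hDeq : D = (2:ℤ) • E := by
    have h1 : ∀ i j : Fin n, (if j ≠ i then pgen n i j else 0)
        = (if i < j then pgen n i j else 0) + (if j < i then pgen n i j else 0) := by
      intro i j
      rcases lt_trichotomy i j with h | h | h
      · simp [h, h.ne', h.asymm]
      · subst h; simp
      · simp [h, h.ne, h.asymm]
    have h2 : ∑ i : Fin n, ∑ j : Fin n, (if j < i then pgen n i j else 0)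
        = ∑ i : Fin n, ∑ j : Fin n, (if i < j then pgen n i j else 0) := by
      rw [Finset.sum_comm]
      exact Finset.sum_congr rfl fun i _ => Finset.sum_congr rfl fun j _ => by
        rw [pgen_comm]
    rw [hD]
    simp only [h1, Finset.sum_add_distrib, h2, hE, two_zsmul]
  -- split S into three parts
  have hSsplit : S = (∑ i : Fin n, ∑ j : Fin n,
        (if j ≠ i ∧ j ≠ σ i then pgen n i (σ i) else 0))
      + (∑ i : Fin n, ∑ j : Fin n, (if j ≠ i ∧ j ≠ σ i then pgen n (σ i) j else 0))
      + (∑ i : Fin n, ∑ j : Fin n, (if j ≠ i ∧ j ≠ σ i then pgen n i j else 0)) := by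
    have hsplit' : ∀ i j : Fin n,
        (if j ≠ i ∧ j ≠ σ i then pgen n i (σ i) + pgen n (σ i) j + pgen n i j else 0)
        = (if j ≠ i ∧ j ≠ σ i then pgen n i (σ i) else 0)
          + (if j ≠ i ∧ j ≠ σ i then pgen n (σ i) j else 0)
          + (if j ≠ i ∧ j ≠ σ i then pgen n i j else 0) := by
      intro i j; split_ifs <;> simp
    simp only [hS, hsplit', Finset.sum_add_distrib]
  -- part 1
  have hS1 : ∑ i : Fin n, ∑ j : Fin n, (if j ≠ i ∧ j ≠ σ i then pgen n i (σ i) else 0)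
      = ((n:ℤ) - 2) • Φ := by
    rw [hΦ, phi, Finset.smul_sum]
    refine Finset.sum_congr rfl fun i _ => ?_
    rw [inner_collapse (fun j => j ≠ i ∧ j ≠ σ i)]
    have hfil : univ.filter (fun j => j ≠ i ∧ j ≠ σ i)
        = ({i, σ i} : Finset (Fin n))ᶜ := by
      ext j; simp [not_or]
    rw [hfil, Finset.card_compl]
    have hcard : ({i, σ i} : Finset (Fin n)).card = 2 := by
      rw [Finset.card_insert_of_notMem (by simp [Ne.symm (hσ i)]), Finset.card_singleton]
    rw [hcard]
    congr 1
    simp only [Fintype.card_fin]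
    omega
  -- part 3 (the pgen i j part)
  have hS2 : ∑ i : Fin n, ∑ j : Fin n, (if j ≠ i ∧ j ≠ σ i then pgen n i j else 0)
      = D - Φ := by
    have hper : ∀ i : Fin n, ∑ j : Fin n, (if j ≠ i ∧ j ≠ σ i then pgen n i j else 0)
        = (∑ j : Fin n, if j ≠ i then pgen n i j else 0) - pgen n i (σ i) :=
      fun i => erase_split i (σ i) (hσ i) (pgen n i)
    simp only [hper]
    rw [Finset.sum_sub_distrib, hD, hΦ, phi]
  -- part 2 (the pgen (σ i) j part)
  have hΦ' : ∑ i : Fin n, pgen n i (σ⁻¹ i) = Φ := by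
    have h1 : ∀ i : Fin n, pgen n i (σ⁻¹ i) = pgen n (σ⁻¹ i) i :=
      fun i => pgen_comm n i (σ⁻¹ i)
    simp only [h1]
    rw [hΦ, phi]
    have := Equiv.sum_comp σ (fun i => pgen n (σ⁻¹ i) i)
    simp only [perm_inv_apply_self] at this
    exact this.symm ▸ rfl
  have hS3 : ∑ i : Fin n, ∑ j : Fin n, (if j ≠ i ∧ j ≠ σ i then pgen n (σ i) j else 0)
      = D - Φ := by
    have hre := Equiv.sum_comp (σ⁻¹ : Equiv.Perm (Fin n))
      (fun i => ∑ j : Fin n, (if j ≠ i ∧ j ≠ σ i then pgen n (σ i) j else 0))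
    simp only [perm_apply_inv_self] at hre
    rw [← hre]
    have hper : ∀ i : Fin n,
        ∑ j : Fin n, (if j ≠ σ⁻¹ i ∧ j ≠ i then pgen n i j else 0)
        = (∑ j : Fin n, if j ≠ i then pgen n i j else 0) - pgen n i (σ⁻¹ i) := by
      intro i
      have hcond : ∀ j : Fin n, (j ≠ σ⁻¹ i ∧ j ≠ i) ↔ (j ≠ i ∧ j ≠ σ⁻¹ i) := fun j => and_comm
      have hinv : σ⁻¹ i ≠ i := by
        intro h
        exact hσ i (by conv_lhs => rw [← h, perm_apply_inv_self])
      calc ∑ j : Fin n, (if j ≠ σ⁻¹ i ∧ j ≠ i then pgen n i j else 0)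
          = ∑ j : Fin n, (if j ≠ i ∧ j ≠ σ⁻¹ i then pgen n i j else 0) := by
            refine Finset.sum_congr rfl fun j _ => ?_
            simp only [hcond]
        _ = (∑ j : Fin n, if j ≠ i then pgen n i j else 0) - pgen n i (σ⁻¹ i) :=
            erase_split i (σ⁻¹ i) hinv (pgen n i)
    simp only [hper]
    rw [Finset.sum_sub_distrib, hD, hΦ']
  have hSeq : S = ((n:ℤ) - 2) • Φ + (D - Φ) + (D - Φ) := by
    rw [hSsplit, hS1, hS2, hS3]
  have h6Φ : (6:ℤ) • Φ ∈ Cgrp n := by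
    rw [hΦ, phi, Finset.smul_sum]
    exact sum_mem fun i _ => six_mem n hn5 (Ne.symm (hσ i))
  have h6E : (6:ℤ) • E ∈ Cgrp n := by
    rw [hE, Finset.smul_sum]
    refine sum_mem fun i _ => ?_
    rw [Finset.smul_sum]
    refine sum_mem fun j _ => ?_
    by_cases h : i < j
    · simp only [h, if_true]
      exact six_mem n hn5 (ne_of_lt h)
    · simp only [h, if_false, smul_zero]
      exact zero_mem _
  have hncast : (n:ℤ) = 6 * (k:ℤ) + 5 := by exact_mod_cast congrArg (Nat.cast : ℕ → ℤ) hk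
  have key : Φ + E = S + T - (k:ℤ) • ((6:ℤ) • Φ) - ((k:ℤ) + 1) • ((6:ℤ) • E) := by
    rw [hSeq, hTeq, hDeq, hncast]
    module
  rw [key]
  exact sub_mem (sub_mem (add_mem hSmem hTmem) (zsmul_mem h6Φ _)) (zsmul_mem h6E _)
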